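/- F₂(n) ≥ 2n² − 5n + 4 for all n ≥ 3: there exists an increasing 2-dimensional array f of size N × N, with N = 2n² − 5n + 3, that contains no n × n subarray of type (1,2) and no n × n subarray of type (2,1). -/
import Mathlib


/-- `f` is of type (1,2) on `A × B`. -/
def Type12On {N : ℕ} (f : Fin N × Fin N → ℝ) (A B : Finset (Fin N)) : Prop :=
  ∀ x₁ ∈ A, ∀ x₂ ∈ B, ∀ y₁ ∈ A, ∀ y₂ ∈ B,
    (f (x₁, x₂) < f (y₁, y₂) ↔ (x₁ < y₁ ∨ (x₁ = y₁ ∧ x₂ < y₂)))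

/-- `f` is of type (2,1) on `A × B`. -/
def Type21On {N : ℕ} (f : Fin N × Fin N → ℝ) (A B : Finset (Fin N)) : Prop :=
  ∀ x₁ ∈ A, ∀ x₂ ∈ B, ∀ y₁ ∈ A, ∀ y₂ ∈ B,
    (f (x₁, x₂) < f (y₁, y₂) ↔ (x₂ < y₂ ∨ (x₂ = y₂ ∧ x₁ < y₁)))

namespace Stmt12Aux

/-- outer order on blocks: by antidiagonal, tiebreak direction alternating with parity. -/
def Gout (m X Y : ℕ) : ℕ := m * (X + Y) + (if 2 ∣ (X + Y) then X else Y)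

/-- the full array value. -/
def FF (d m x y : ℕ) : ℕ :=
  d * d * Gout m (x / d) (y / d) + (d * (x % d) + y % d)

lemma T_lt {m X Y : ℕ} (hX : X < m) (hY : Y < m) :
    (if 2 ∣ (X + Y) then X else Y) < m := by
  split_ifs <;> assumption

lemma inner_lt {d : ℕ} (hd : 0 < d) (x y : ℕ) : d * (x % d) + y % d < d * d := by
  have h1 : x % d < d := Nat.mod_lt _ hd
  have h2 : y % d < d := Nat.mod_lt _ hd
  calc d * (x % d) + y % d < d * (x % d) + d := Nat.add_lt_add_left h2 _
    _ = d * (x % d + 1) := by ring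
    _ ≤ d * d := mul_le_mul_right (Nat.succ_le_of_lt h1) d

lemma Gout_sum_le {m X Y X' Y' : ℕ} (h3 : X' < m) (h4 : Y' < m)
    (h : Gout m X Y ≤ Gout m X' Y') : X + Y ≤ X' + Y' := by
  by_contra hc
  push_neg at hc
  have e1 : m * (X' + Y') + m ≤ m * (X + Y) := by
    calc m * (X' + Y') + m = m * ((X' + Y') + 1) := by ring
      _ ≤ m * (X + Y) := mul_le_mul_right (Nat.succ_le_of_lt hc) m
  have t2 : (if 2 ∣ (X' + Y') then X' else Y') < m := T_lt h3 h4
  unfold Gout at h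
  have hcontra : m * (X + Y) < m * (X + Y) :=
    calc m * (X + Y) ≤ m * (X + Y) + (if 2 ∣ (X + Y) then X else Y) := Nat.le_add_right _ _
      _ ≤ m * (X' + Y') + (if 2 ∣ (X' + Y') then X' else Y') := h
      _ < m * (X' + Y') + m := Nat.add_lt_add_left t2 _
      _ ≤ m * (X + Y) := e1
  exact lt_irrefl _ hcontra

lemma Gout_inj {m X Y X' Y' : ℕ} (h1 : X < m) (h2 : Y < m) (h3 : X' < m) (h4 : Y' < m)
    (h : Gout m X Y = Gout m X' Y') : X = X' ∧ Y = Y' := by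
  have hS : X + Y = X' + Y' :=
    le_antisymm (Gout_sum_le h3 h4 h.le) (Gout_sum_le h1 h2 h.ge)
  unfold Gout at h
  rw [← hS] at h
  have hT := Nat.add_left_cancel h
  by_cases hp : 2 ∣ (X + Y)
  · have hx : X = X' := by simpa [hp] using hT
    exact ⟨hx, by omega⟩
  · have hy : Y = Y' := by simpa [hp] using hT
    exact ⟨by omega, hy⟩

lemma Gout_lt_cases {m X Y X' Y' : ℕ} (h3 : X' < m) (h4 : Y' < m)
    (h : Gout m X Y < Gout m X' Y') :
    X + Y < X' + Y' ∨
      (X + Y = X' + Y' ∧ ((2 ∣ (X + Y) ∧ X < X') ∨ (¬ 2 ∣ (X + Y) ∧ Y < Y'))) := by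
  have hS := Gout_sum_le h3 h4 h.le
  rcases eq_or_lt_of_le hS with he | hlt
  · right
    refine ⟨he, ?_⟩
    unfold Gout at h
    rw [← he] at h
    have hT := lt_of_add_lt_add_left h
    by_cases hp : 2 ∣ (X + Y)
    · exact Or.inl ⟨hp, by simpa [hp] using hT⟩
    · exact Or.inr ⟨hp, by simpa [hp] using hT⟩
  · exact Or.inl hlt

lemma Gout_le_of_FF_le {d m x y x' y' : ℕ} (hd : 0 < d)
    (h : FF d m x y ≤ FF d m x' y') :
    Gout m (x / d) (y / d) ≤ Gout m (x' / d) (y' / d) := by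
  by_contra hc
  push_neg at hc
  have e1 : d * d * Gout m (x' / d) (y' / d) + d * d ≤ d * d * Gout m (x / d) (y / d) := by
    calc d * d * Gout m (x' / d) (y' / d) + d * d
        = d * d * (Gout m (x' / d) (y' / d) + 1) := by ring
      _ ≤ d * d * Gout m (x / d) (y / d) := mul_le_mul_right (Nat.succ_le_of_lt hc) _
  unfold FF at h
  have hlt : d * d * Gout m (x' / d) (y' / d) + (d * (x' % d) + y' % d)
      < d * d * Gout m (x / d) (y / d) + (d * (x % d) + y % d) :=
    calc d * d * Gout m (x' / d) (y' / d) + (d * (x' % d) + y' % d)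
        < d * d * Gout m (x' / d) (y' / d) + d * d := Nat.add_lt_add_left (inner_lt hd x' y') _
      _ ≤ d * d * Gout m (x / d) (y / d) := e1
      _ ≤ d * d * Gout m (x / d) (y / d) + (d * (x % d) + y % d) := Nat.le_add_right _ _
  exact absurd h (not_le.mpr hlt)

lemma inner_inj {d u v u' v' : ℕ} (hd : 0 < d) (hv : v < d) (hv' : v' < d)
    (h : d * u + v = d * u' + v') : u = u' ∧ v = v' := by
  have e1 : (d * u + v) / d = u := by
    rw [Nat.mul_add_div hd, Nat.div_eq_of_lt hv, Nat.add_zero]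
  have e2 : (d * u' + v') / d = u' := by
    rw [Nat.mul_add_div hd, Nat.div_eq_of_lt hv', Nat.add_zero]
  have hu : u = u' := by rw [← e1, ← e2, h]
  subst hu
  exact ⟨rfl, Nat.add_left_cancel h⟩

lemma FF_inj {d m x y x' y' : ℕ} (hd : 0 < d)
    (b1 : x / d < m) (b2 : y / d < m) (b3 : x' / d < m) (b4 : y' / d < m)
    (h : FF d m x y = FF d m x' y') : x = x' ∧ y = y' := by
  have hG : Gout m (x / d) (y / d) = Gout m (x' / d) (y' / d) :=
    le_antisymm (Gout_le_of_FF_le hd h.le) (Gout_le_of_FF_le hd h.ge)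
  obtain ⟨eX, eY⟩ := Gout_inj b1 b2 b3 b4 hG
  unfold FF at h
  rw [eX, eY] at h
  have hI : d * (x % d) + y % d = d * (x' % d) + y' % d := Nat.add_left_cancel h
  obtain ⟨eu, ev⟩ := inner_inj hd (Nat.mod_lt y hd) (Nat.mod_lt y' hd) hI
  constructor
  · calc x = d * (x / d) + x % d := (Nat.div_add_mod x d).symm
      _ = d * (x' / d) + x' % d := by rw [eX, eu]
      _ = x' := Nat.div_add_mod x' d
  · calc y = d * (y / d) + y % d := (Nat.div_add_mod y d).symm
      _ = d * (y' / d) + y' % d := by rw [eY, ev]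
      _ = y' := Nat.div_add_mod y' d

lemma FF_mono {d m x y x' y' : ℕ} (hd : 0 < d) (hx : x ≤ x') (hy : y ≤ y')
    (b3 : x' / d < m) (b4 : y' / d < m) : FF d m x y ≤ FF d m x' y' := by
  have hX : x / d ≤ x' / d := Nat.div_le_div_right hx
  have hY : y / d ≤ y' / d := Nat.div_le_div_right hy
  rcases eq_or_lt_of_le (add_le_add hX hY) with he | hlt
  · have eX : x / d = x' / d := by
      by_contra hne
      exact absurd he (ne_of_lt (add_lt_add_of_lt_of_le (lt_of_le_of_ne hX hne) hY))
    have eY : y / d = y' / d := by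
      by_contra hne
      exact absurd he (ne_of_lt (add_lt_add_of_le_of_lt hX (lt_of_le_of_ne hY hne)))
    have hu : x % d ≤ x' % d := by
      have c1 : d * (x' / d) + x % d ≤ d * (x' / d) + x' % d := by
        calc d * (x' / d) + x % d = d * (x / d) + x % d := by rw [eX]
          _ = x := Nat.div_add_mod x d
          _ ≤ x' := hx
          _ = d * (x' / d) + x' % d := (Nat.div_add_mod x' d).symm
      exact Nat.le_of_add_le_add_left c1
    have hv : y % d ≤ y' % d := by
      have c1 : d * (y' / d) + y % d ≤ d * (y' / d) + y' % d := by
        calc d * (y' / d) + y % d = d * (y / d) + y % d := by rw [eY]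
          _ = y := Nat.div_add_mod y d
          _ ≤ y' := hy
          _ = d * (y' / d) + y' % d := (Nat.div_add_mod y' d).symm
      exact Nat.le_of_add_le_add_left c1
    unfold FF
    rw [eX, eY]
    exact Nat.add_le_add_left (add_le_add (mul_le_mul_right hu d) hv) _
  · have hT1 : (if 2 ∣ (x / d + y / d) then x / d else y / d) < m :=
      T_lt (lt_of_le_of_lt hX b3) (lt_of_le_of_lt hY b4)
    have hG : Gout m (x / d) (y / d) < Gout m (x' / d) (y' / d) := by
      unfold Gout
      calc m * (x / d + y / d) + (if 2 ∣ (x / d + y / d) then x / d else y / d)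
          < m * (x / d + y / d) + m := Nat.add_lt_add_left hT1 _
        _ = m * ((x / d + y / d) + 1) := by ring
        _ ≤ m * (x' / d + y' / d) := mul_le_mul_right (Nat.succ_le_of_lt hlt) m
        _ ≤ m * (x' / d + y' / d) + (if 2 ∣ (x' / d + y' / d) then x' / d else y' / d) :=
            Nat.le_add_right _ _
    unfold FF
    have : d * d * Gout m (x / d) (y / d) + (d * (x % d) + y % d)
        < d * d * Gout m (x' / d) (y' / d) + (d * (x' % d) + y' % d) :=
      calc d * d * Gout m (x / d) (y / d) + (d * (x % d) + y % d)
          < d * d * Gout m (x / d) (y / d) + d * d := Nat.add_lt_add_left (inner_lt hd x y) _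
        _ = d * d * (Gout m (x / d) (y / d) + 1) := by ring
        _ ≤ d * d * Gout m (x' / d) (y' / d) := mul_le_mul_right (Nat.succ_le_of_lt hG) _
        _ ≤ d * d * Gout m (x' / d) (y' / d) + (d * (x' % d) + y' % d) := Nat.le_add_right _ _
    exact this.le

lemma step12 {d m a b a' b' : ℕ} (hd : 0 < d)
    (b1 : a / d < m) (b2 : b / d < m) (b3 : a' / d < m) (b4 : b' / d < m)
    (hY : b / d < b' / d) (h : FF d m a b' < FF d m a' b) :
    (a / d + b' / d < a' / d + b / d) ∨
      (a / d + b' / d = a' / d + b / d ∧ 2 ∣ (a / d + b' / d)) := by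
  have hG := Gout_le_of_FF_le hd h.le
  rcases eq_or_lt_of_le hG with he | hlt
  · obtain ⟨_, e2⟩ := Gout_inj b1 b4 b3 b2 he
    exact absurd e2 (ne_of_gt hY)
  · rcases Gout_lt_cases b3 b2 hlt with h1 | ⟨hS, hc⟩
    · exact Or.inl h1
    · rcases hc with ⟨hp, _⟩ | ⟨_, hYY⟩
      · exact Or.inr ⟨hS, hp⟩
      · exact absurd hYY (Nat.lt_asymm hY)

lemma step21 {d m a b a' b' : ℕ} (hd : 0 < d)
    (b1 : a / d < m) (b2 : b / d < m) (b3 : a' / d < m) (b4 : b' / d < m)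
    (hX : a / d < a' / d) (h : FF d m a' b < FF d m a b') :
    (a' / d + b / d < a / d + b' / d) ∨
      (a' / d + b / d = a / d + b' / d ∧ ¬ 2 ∣ (a' / d + b / d)) := by
  have hG := Gout_le_of_FF_le hd h.le
  rcases eq_or_lt_of_le hG with he | hlt
  · obtain ⟨e1, _⟩ := Gout_inj b3 b2 b1 b4 he
    exact absurd e1 (ne_of_gt hX)
  · rcases Gout_lt_cases b1 b4 hlt with h1 | ⟨hS, hc⟩
    · exact Or.inl h1
    · rcases hc with ⟨_, hXX⟩ | ⟨hp, _⟩
      · exact absurd hXX (Nat.lt_asymm hX)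
      · exact Or.inr ⟨hS, hp⟩

lemma chain_ind {W C : ℕ} (hw : 1 ≤ W) (g : ℕ → ℕ) :
    ∀ t : ℕ,
      (∀ i, i < t → (g i + W + 1 ≤ g (i + 1)) ∨ (g (i + 1) = g i + W ∧ 2 ∣ (g i + C))) →
      (g 0 + 2 * t ≤ g t + 1 ∧ (2 ∣ (g t + C) → g 0 + 2 * t ≤ g t)) := by
  intro t
  induction t with
  | zero => intro _; omega
  | succ t ih =>
    intro h
    obtain ⟨ih1, ih2⟩ := ih (fun i hi => h i (by omega))
    rcases h t (by omega) with h' | ⟨h1, h2⟩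
    · by_cases hp : 2 ∣ (g t + C)
      · have := ih2 hp; omega
      · omega
    · have := ih2 h2; omega

lemma chain_contra {W C MM : ℕ} (hw : 1 ≤ W) (g : ℕ → ℕ) (t : ℕ) (hm : MM < 2 * t)
    (h : ∀ i, i < t → (g i + W + 1 ≤ g (i + 1)) ∨ (g (i + 1) = g i + W ∧ 2 ∣ (g i + C)))
    (hlast : g t < MM) : False := by
  have := chain_ind hw g t h
  omega

lemma gap_of_strict {g : ℕ → ℕ} : ∀ {t : ℕ}, (∀ i, i < t → g i < g (i + 1)) → g 0 + t ≤ g t := by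
  intro t
  induction t with
  | zero => intro _; omega
  | succ t ih =>
    intro h
    have h1 := ih (fun i hi => h i (by omega))
    have h2 := h t (by omega)
    omega

lemma mono_seq {M t : ℕ} (S : Finset (Fin M)) (hS : S.card = t + 1) :
    ∃ g : ℕ → Fin M, (∀ i, g i ∈ S) ∧ (∀ i, i < t → g i < g (i + 1)) := by
  have ht : ∀ i : ℕ, min i t < t + 1 := fun i => by omega
  refine ⟨fun i => ((S.orderIsoOfFin hS ⟨min i t, ht i⟩ : {x // x ∈ S}) : Fin M),
    fun i => (S.orderIsoOfFin hS ⟨min i t, ht i⟩).2, ?_⟩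
  intro i hi
  have hlt : (⟨min i t, ht i⟩ : Fin (t + 1)) < ⟨min (i + 1) t, ht (i + 1)⟩ := by
    rw [Fin.mk_lt_mk]; omega
  exact Subtype.coe_lt_coe.mpr ((S.orderIsoOfFin hS).strictMono hlt)

end Stmt12Aux

open Stmt12Aux in
/-- `F₂(n) ≥ 2n² - 5n + 4`: there is an increasing `N × N` array with
`N = 2n² - 5n + 3` containing no `n × n` subarray of type (1,2) or (2,1). -/
theorem stmt_12 (n : ℕ) (hn : 3 ≤ n) :
    ∃ f : Fin (2 * n ^ 2 - 5 * n + 3) × Fin (2 * n ^ 2 - 5 * n + 3) → ℝ,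
      Function.Injective f ∧
      (∀ x y : Fin (2 * n ^ 2 - 5 * n + 3) × Fin (2 * n ^ 2 - 5 * n + 3),
        x.1 ≤ y.1 → x.2 ≤ y.2 → f x ≤ f y) ∧
      (¬ ∃ A B : Finset (Fin (2 * n ^ 2 - 5 * n + 3)),
        A.card = n ∧ B.card = n ∧ (Type12On f A B ∨ Type21On f A B)) := by
  obtain ⟨k, rfl⟩ : ∃ k, n = k + 3 := ⟨n - 3, by omega⟩
  have hsq : (k + 3) ^ 2 = k * k + 6 * k + 9 := by ring
  have hdm : (k + 2) * (2 * k + 3) = 2 * (k * k) + 7 * k + 6 := by ring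
  have hNdm : 2 * (k + 3) ^ 2 - 5 * (k + 3) + 3 = (k + 2) * (2 * k + 3) := by
    rw [hsq, hdm]; omega
  have hdpos : 0 < k + 2 := by omega
  have hval : ∀ a : Fin (2 * (k + 3) ^ 2 - 5 * (k + 3) + 3),
      (a : ℕ) < (k + 2) * (2 * k + 3) := fun a => hNdm ▸ a.isLt
  have hdiv : ∀ a : Fin (2 * (k + 3) ^ 2 - 5 * (k + 3) + 3),
      (a : ℕ) / (k + 2) < 2 * k + 3 := fun a =>
    (Nat.div_lt_iff_lt_mul hdpos).mpr ((mul_comm (k + 2) (2 * k + 3)) ▸ hval a)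
  refine ⟨fun p => ((FF (k + 2) (2 * k + 3) p.1.1 p.2.1 : ℕ) : ℝ), ?_, ?_, ?_⟩
  · -- injective
    intro p q h
    have h' : ((FF (k + 2) (2 * k + 3) p.1.1 p.2.1 : ℕ) : ℝ)
        = ((FF (k + 2) (2 * k + 3) q.1.1 q.2.1 : ℕ) : ℝ) := h
    have hFF : FF (k + 2) (2 * k + 3) p.1.1 p.2.1 = FF (k + 2) (2 * k + 3) q.1.1 q.2.1 := by
      exact_mod_cast h'
    obtain ⟨e1, e2⟩ := FF_inj hdpos (hdiv p.1) (hdiv p.2) (hdiv q.1) (hdiv q.2) hFF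
    exact Prod.ext (Fin.ext e1) (Fin.ext e2)
  · -- monotone
    intro x y h1 h2
    exact Nat.cast_le.mpr
      (FF_mono hdpos (Fin.le_def.mp h1) (Fin.le_def.mp h2) (hdiv y.1) (hdiv y.2))
  · rintro ⟨A, B, hA, hB, hAB⟩
    obtain ⟨gA, hgAmem, hgAs⟩ := mono_seq (t := k + 2) A hA
    obtain ⟨gB, hgBmem, hgBs⟩ := mono_seq (t := k + 2) B hB
    rcases hAB with h12 | h21
    · -- type (1,2)
      have hgapB : (gB 0 : ℕ) + (k + 2) ≤ (gB (k + 2) : ℕ) :=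
        gap_of_strict (g := fun i => (gB i : ℕ)) (fun i hi => Fin.lt_def.mp (hgBs i hi))
      have hY : (gB 0 : ℕ) / (k + 2) < (gB (k + 2) : ℕ) / (k + 2) := by
        have h1 : ((gB 0 : ℕ) + (k + 2)) / (k + 2) ≤ (gB (k + 2) : ℕ) / (k + 2) :=
          Nat.div_le_div_right hgapB
        rw [Nat.add_div_right _ hdpos] at h1
        exact h1
      have hw : 1 ≤ (gB (k + 2) : ℕ) / (k + 2) - (gB 0 : ℕ) / (k + 2) :=
        Nat.le_sub_of_add_le (by rw [Nat.add_comm]; exact hY)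
      have hstep : ∀ i, i < k + 2 →
          ((gA i : ℕ) / (k + 2) + ((gB (k + 2) : ℕ) / (k + 2) - (gB 0 : ℕ) / (k + 2)) + 1
              ≤ (gA (i + 1) : ℕ) / (k + 2)) ∨
          ((gA (i + 1) : ℕ) / (k + 2)
              = (gA i : ℕ) / (k + 2) + ((gB (k + 2) : ℕ) / (k + 2) - (gB 0 : ℕ) / (k + 2))
            ∧ 2 ∣ ((gA i : ℕ) / (k + 2) + (gB (k + 2) : ℕ) / (k + 2))) := by
        intro i hi
        have hlt : gA i < gA (i + 1) := hgAs i hi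
        have hfl := (h12 (gA i) (hgAmem i) (gB (k + 2)) (hgBmem (k + 2))
          (gA (i + 1)) (hgAmem (i + 1)) (gB 0) (hgBmem 0)).mpr (Or.inl hlt)
        have hfl' : ((FF (k + 2) (2 * k + 3) (gA i : ℕ) (gB (k + 2) : ℕ) : ℕ) : ℝ)
            < ((FF (k + 2) (2 * k + 3) (gA (i + 1) : ℕ) (gB 0 : ℕ) : ℕ) : ℝ) := hfl
        have hFF : FF (k + 2) (2 * k + 3) (gA i : ℕ) (gB (k + 2) : ℕ)
            < FF (k + 2) (2 * k + 3) (gA (i + 1) : ℕ) (gB 0 : ℕ) := by exact_mod_cast hfl'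
        have hres := step12 hdpos (hdiv (gA i)) (hdiv (gB 0)) (hdiv (gA (i + 1)))
          (hdiv (gB (k + 2))) hY hFF
        obtain ⟨X1, hX1⟩ : ∃ z, z = (gA i : ℕ) / (k + 2) := ⟨_, rfl⟩
        obtain ⟨X2, hX2⟩ : ∃ z, z = (gA (i + 1) : ℕ) / (k + 2) := ⟨_, rfl⟩
        obtain ⟨Y0, hY0⟩ : ∃ z, z = (gB 0 : ℕ) / (k + 2) := ⟨_, rfl⟩
        obtain ⟨Yk, hYk⟩ : ∃ z, z = (gB (k + 2) : ℕ) / (k + 2) := ⟨_, rfl⟩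
        rw [← hX1, ← hX2, ← hY0, ← hYk] at hres ⊢
        rw [← hY0, ← hYk] at hY
        omega
      exact chain_contra hw (fun i => (gA i : ℕ) / (k + 2)) (k + 2) (by omega) hstep
        (hdiv (gA (k + 2)))
    · -- type (2,1)
      have hgapA : (gA 0 : ℕ) + (k + 2) ≤ (gA (k + 2) : ℕ) :=
        gap_of_strict (g := fun i => (gA i : ℕ)) (fun i hi => Fin.lt_def.mp (hgAs i hi))
      have hX : (gA 0 : ℕ) / (k + 2) < (gA (k + 2) : ℕ) / (k + 2) := by
        have h1 : ((gA 0 : ℕ) + (k + 2)) / (k + 2) ≤ (gA (k + 2) : ℕ) / (k + 2) :=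
          Nat.div_le_div_right hgapA
        rw [Nat.add_div_right _ hdpos] at h1
        exact h1
      have hw : 1 ≤ (gA (k + 2) : ℕ) / (k + 2) - (gA 0 : ℕ) / (k + 2) :=
        Nat.le_sub_of_add_le (by rw [Nat.add_comm]; exact hX)
      have hstep : ∀ i, i < k + 2 →
          ((gB i : ℕ) / (k + 2) + ((gA (k + 2) : ℕ) / (k + 2) - (gA 0 : ℕ) / (k + 2)) + 1
              ≤ (gB (i + 1) : ℕ) / (k + 2)) ∨
          ((gB (i + 1) : ℕ) / (k + 2)
              = (gB i : ℕ) / (k + 2) + ((gA (k + 2) : ℕ) / (k + 2) - (gA 0 : ℕ) / (k + 2))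
            ∧ 2 ∣ ((gB i : ℕ) / (k + 2) + ((gA (k + 2) : ℕ) / (k + 2) + 1))) := by
        intro i hi
        have hlt : gB i < gB (i + 1) := hgBs i hi
        have hfl := (h21 (gA (k + 2)) (hgAmem (k + 2)) (gB i) (hgBmem i)
          (gA 0) (hgAmem 0) (gB (i + 1)) (hgBmem (i + 1))).mpr (Or.inl hlt)
        have hfl' : ((FF (k + 2) (2 * k + 3) (gA (k + 2) : ℕ) (gB i : ℕ) : ℕ) : ℝ)
            < ((FF (k + 2) (2 * k + 3) (gA 0 : ℕ) (gB (i + 1) : ℕ) : ℕ) : ℝ) := hfl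
        have hFF : FF (k + 2) (2 * k + 3) (gA (k + 2) : ℕ) (gB i : ℕ)
            < FF (k + 2) (2 * k + 3) (gA 0 : ℕ) (gB (i + 1) : ℕ) := by exact_mod_cast hfl'
        have hres := step21 hdpos (hdiv (gA 0)) (hdiv (gB i)) (hdiv (gA (k + 2)))
          (hdiv (gB (i + 1))) hX hFF
        obtain ⟨Y1, hY1⟩ : ∃ z, z = (gB i : ℕ) / (k + 2) := ⟨_, rfl⟩
        obtain ⟨Y2, hY2⟩ : ∃ z, z = (gB (i + 1) : ℕ) / (k + 2) := ⟨_, rfl⟩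
        obtain ⟨X0, hX0⟩ : ∃ z, z = (gA 0 : ℕ) / (k + 2) := ⟨_, rfl⟩
        obtain ⟨Xk, hXk⟩ : ∃ z, z = (gA (k + 2) : ℕ) / (k + 2) := ⟨_, rfl⟩
        rw [← hY1, ← hY2, ← hX0, ← hXk] at hres ⊢
        rw [← hX0, ← hXk] at hX
        omega
      exact chain_contra hw (fun i => (gB i : ℕ) / (k + 2)) (k + 2) (by omega) hstep
        (hdiv (gB (k + 2)))
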